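/- Let (kᵢ) be a sequence of positive naturals with kᵢ₊₁ ≥ 2kᵢ for all i, let ℓ₀ = (1,1,1,1) (a row vector), ℓᵢ₊₁ = ℓᵢ·A(kᵢ), and let (wᵢ) be a sequence in ℝ₊³ with wᵢ = B(kᵢ)·wᵢ₊₁. Define Sᵢ = ℓᵢ·C·wᵢ. Then Sᵢ₊₁ > (1 − 2/kᵢ)·Sᵢ for all i ≥ 0. -/

import Mathlib

open Matrix

/-- The matrix `B(k)` from the paper, over the reals. -/
def Bmat (k : ℕ) : Matrix (Fin 3) (Fin 3) ℝ := !![(k : ℝ), (k : ℝ), 1; 1, 0, 0; 0, 1, 0]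

/-- The matrix `A(k)` from the paper. -/
def Amat (k : ℕ) : Matrix (Fin 4) (Fin 4) ℝ :=
  !![0, 0, 1, (k : ℝ); 1, 0, 0, 0; 0, 1, 0, 0; 0, 1, 1, (k : ℝ) - 1]

/-- The matrix `C` from the paper. -/
def Cmat : Matrix (Fin 4) (Fin 3) ℝ := !![1, 0, 0; 0, 1, 0; 0, 0, 1; 1, 0, 0]

theorem stmt6 (k : ℕ → ℕ) (hk : ∀ i, 1 ≤ k i) (hk2 : ∀ i, 2 * k i ≤ k (i + 1))
    (l : ℕ → Fin 4 → ℝ) (hl0 : l 0 = fun _ => 1)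
    (hl : ∀ i, l (i + 1) = Matrix.vecMul (l i) (Amat (k i)))
    (w : ℕ → Fin 3 → ℝ) (hw : ∀ i j, 0 < w i j)
    (hwrec : ∀ i, w i = (Bmat (k i)).mulVec (w (i + 1))) :
    ∀ i, (1 - 2 / (k i : ℝ)) * (l i ⬝ᵥ Cmat.mulVec (w i)) < l (i + 1) ⬝ᵥ Cmat.mulVec (w (i + 1)) := by
  have lpos : ∀ i j, 0 < l i j := by
    intro i
    induction i with
    | zero => intro j; simp [hl0]
    | succ n ih =>
      have hk1 : (1:ℝ) ≤ (k n : ℝ) := by exact_mod_cast hk n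
      intro j
      rw [hl n]
      fin_cases j <;>
        simp [Matrix.vecMul, Amat, dotProduct, Fin.sum_univ_four, Matrix.vecHead, Matrix.vecTail] <;>
        nlinarith [ih 0, ih 1, ih 2, ih 3]
  intro i
  have hKpos : (0:ℝ) < (k i : ℝ) := by exact_mod_cast hk i
  have hK1 : (1:ℝ) ≤ (k i : ℝ) := by exact_mod_cast hk i
  have hK2 : 2 * (k i : ℝ) ≤ (k (i+1) : ℝ) := by exact_mod_cast hk2 i
  have e0 : w (i+1) 0 = (k (i+1):ℝ) * w (i+2) 0 + (k (i+1):ℝ) * w (i+2) 1 + w (i+2) 2 := by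
    conv_lhs => rw [hwrec (i+1)]
    simp [Bmat, Matrix.mulVec, dotProduct, Fin.sum_univ_three]
  have e1 : w (i+1) 1 = w (i+2) 0 := by
    conv_lhs => rw [hwrec (i+1)]
    simp [Bmat, Matrix.mulVec, dotProduct, Fin.sum_univ_three]
  have hxy : 2 * (k i : ℝ) * w (i+1) 1 < w (i+1) 0 := by
    rw [e0, e1]
    nlinarith [hw (i+2) 0, hw (i+2) 1, hw (i+2) 2, hKpos]
  set a := l i 0; set b := l i 1; set c := l i 2; set d := l i 3
  set x := w (i+1) 0; set y := w (i+1) 1; set z := w (i+1) 2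
  have ha := lpos i 0; have hb := lpos i 1; have hc := lpos i 2; have hd := lpos i 3
  have hx := hw (i+1) 0; have hy := hw (i+1) 1; have hz := hw (i+1) 2
  have f0 : w i 0 = (k i:ℝ)*x + (k i:ℝ)*y + z := by
    conv_lhs => rw [hwrec i]
    simp [Bmat, Matrix.mulVec, dotProduct, Fin.sum_univ_three, Matrix.vecHead, Matrix.vecTail]
    rfl
  have f1 : w i 1 = x := by
    conv_lhs => rw [hwrec i]
    simp [Bmat, Matrix.mulVec, dotProduct, Fin.sum_univ_three, Matrix.vecHead, Matrix.vecTail]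
    rfl
  have f2 : w i 2 = y := by
    conv_lhs => rw [hwrec i]
    simp [Bmat, Matrix.mulVec, dotProduct, Fin.sum_univ_three, Matrix.vecHead, Matrix.vecTail]
    rfl
  have hS : l i ⬝ᵥ Cmat.mulVec (w i) =
      ((k i:ℝ)*(a+d)+b)*x + ((k i:ℝ)*(a+d)+c)*y + (a+d)*z := by
    simp [Cmat, Matrix.mulVec, dotProduct, Fin.sum_univ_four, Fin.sum_univ_three,
      Matrix.vecHead, Matrix.vecTail, f0, f1, f2]
    ring
  have hS' : l (i+1) ⬝ᵥ Cmat.mulVec (w (i+1)) =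
      (b + (k i:ℝ)*a + ((k i:ℝ)-1)*d)*x + (c+d)*y + (a+d)*z := by
    rw [hl i]
    simp [Cmat, Amat, Matrix.vecMul, Matrix.mulVec, dotProduct, Fin.sum_univ_four,
      Fin.sum_univ_three, Matrix.vecHead, Matrix.vecTail]
    ring
  rw [hS, hS', show (1 - 2/(k i:ℝ)) = ((k i:ℝ)-2)/(k i:ℝ) by field_simp,
    div_mul_eq_mul_div, div_lt_iff₀ hKpos]
  nlinarith [mul_pos hb hx, mul_pos hc hy, mul_pos (mul_pos hKpos ha) (sub_pos.2 hxy),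
    mul_pos (mul_pos hKpos hd) (sub_pos.2 hxy), mul_pos ha hz, mul_pos hd hz,
    mul_pos hKpos (mul_pos hd hx), mul_pos (mul_pos hKpos hKpos) (mul_pos ha hy)]
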